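/- Let z_1, ..., z_K be distinct complex numbers with positive integer multiplicities n_1, ..., n_K, N = n_1 + ... + n_K, and data f_{k,s} ∈ ℂ for 0 ≤ s ≤ n_k − 1. Let w_{k,r} be the barycentric weights. Define the polynomial π̂(z) = Σ_{k=1}^K π_k(z) · Σ_{s=0}^{n_k−1} (f_{k,s}/s!) · Σ_{r=0}^{n_k−1−s} w_{k,r}(z − z_k)^{r+s}. Then π̂ is a polynomial of degree at most N − 1 satisfying π̂^{(r)}(z_k) = f_{k,r} for every 1 ≤ k ≤ K and 0 ≤ r ≤ n_k − 1; that is, π̂ is the Hermite interpolant, giving the first barycentric form of the Hermite interpolant. -/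

import Mathlib

open Polynomial Finset

private lemma evalIter_zero_of_dvd {a : ℂ} {m r : ℕ} {p : ℂ[X]}
    (h : (X - C a) ^ m ∣ p) (hr : r < m) : (Polynomial.derivative^[r] p).eval a = 0 := by
  rcases eq_or_ne p 0 with rfl | hp
  · simp
  · have hle : m ≤ p.rootMultiplicity a := (Polynomial.le_rootMultiplicity_iff hp).mpr h
    exact Polynomial.isRoot_iterate_derivative_of_lt_rootMultiplicity (lt_of_lt_of_le hr hle)

private lemma evalIter_taylor (a : ℂ) (m r : ℕ) (c : ℕ → ℂ) (hr : r < m) :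
    (Polynomial.derivative^[r]
      (∑ s ∈ Finset.range m, C (c s / (s.factorial : ℂ)) * (X - C a) ^ s)).eval a = c r := by
  rw [iterate_derivative_sum]
  simp only [iterate_derivative_C_mul, iterate_derivative_X_sub_pow, eval_finset_sum, eval_mul,
    eval_C, eval_smul, eval_pow, eval_sub, eval_X, sub_self, smul_eq_mul]
  rw [Finset.sum_eq_single r]
  · have h0 : (r.factorial : ℂ) ≠ 0 := by exact_mod_cast Nat.factorial_ne_zero r
    field_simp [Nat.descFactorial_self]
    simp [Nat.descFactorial_self]
  · intro s hs hsr
    rcases lt_or_gt_of_ne hsr with h1 | h1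
    · simp [Nat.descFactorial_eq_zero_iff_lt.mpr h1]
    · rw [zero_pow (by omega)]; ring
  · intro h; exact absurd (Finset.mem_range.mpr hr) h

private lemma key_dvd (a : ℂ) (m : ℕ) (p : ℂ[X]) (c v : ℕ → ℂ)
    (hw : (X - C a) ^ m ∣ p * (∑ r ∈ Finset.range m, C (v r) * (X - C a) ^ r) - 1) :
    (X - C a) ^ m ∣
      p * (∑ s ∈ Finset.range m, C (c s) *
          ∑ r ∈ Finset.range (m - s), C (v r) * (X - C a) ^ (r + s))
        - ∑ s ∈ Finset.range m, C (c s) * (X - C a) ^ s := by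
  rw [Finset.mul_sum, ← Finset.sum_sub_distrib]
  refine Finset.dvd_sum fun s hs => ?_
  have hsm : s < m := Finset.mem_range.mp hs
  -- truncated W
  set W : ℂ[X] := ∑ r ∈ Finset.range m, C (v r) * (X - C a) ^ r with hW
  set Wt : ℂ[X] := ∑ r ∈ Finset.range (m - s), C (v r) * (X - C a) ^ r with hWt
  have hT : (∑ r ∈ Finset.range (m - s), C (v r) * (X - C a) ^ (r + s))
      = Wt * (X - C a) ^ s := by
    rw [hWt, Finset.sum_mul]
    exact Finset.sum_congr rfl fun r _ => by rw [pow_add]; ring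
  have hD : (X - C a) ^ (m - s) ∣ W - Wt := by
    have hsplit : W = Wt + ∑ r ∈ Finset.Ico (m - s) m, C (v r) * (X - C a) ^ r := by
      rw [hW, hWt, Finset.range_eq_Ico, Finset.range_eq_Ico]
      exact (Finset.sum_Ico_consecutive (fun r => C (v r) * (X - C a) ^ r) (Nat.zero_le (m - s)) (Nat.sub_le m s)).symm
    rw [hsplit, add_sub_cancel_left]
    refine Finset.dvd_sum fun r hr => ?_
    exact Dvd.dvd.mul_left (pow_dvd_pow _ (Finset.mem_Ico.mp hr).1) _
  obtain ⟨u, hu⟩ := hw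
  obtain ⟨t, ht⟩ := hD
  refine ⟨C (c s) * ((X - C a) ^ s * u - p * t), ?_⟩
  have hpow : (X - C a : ℂ[X]) ^ m = (X - C a) ^ s * (X - C a) ^ (m - s) := by
    rw [← pow_add]; congr 1; omega
  calc p * (C (c s) * ∑ r ∈ Finset.range (m - s), C (v r) * (X - C a) ^ (r + s))
        - C (c s) * (X - C a) ^ s
      = C (c s) * ((X - C a) ^ s * ((p * W - 1) - p * (W - Wt))) := by rw [hT]; ring
    _ = C (c s) * ((X - C a) ^ s * ((X - C a) ^ m * u
          - p * ((X - C a) ^ (m - s) * t))) := by rw [hu, ht]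
    _ = (X - C a) ^ m * (C (c s) * ((X - C a) ^ s * u - p * t)) := by rw [hpow]; ring


/-- The first barycentric form of the Hermite interpolant: with barycentric
weights `w k r` (coefficients of the unique `W_k` of degree `≤ n k - 1` with
`(X - z k)^(n k) ∣ π_k·W_k - 1`), the polynomial
`π̂ = ∑_k π_k(z) · ∑_{s<n k} (f k s / s!) · ∑_{r < n k - s} w k r (z - z k)^(r+s)`
has degree at most `N - 1` and satisfies all Hermite interpolation conditions
`π̂^(r)(z k) = f k r`. -/
theorem first_barycentric_form_is_hermite_interpolant
    (K : ℕ) (z : Fin K → ℂ) (hz : Function.Injective z)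
    (n : Fin K → ℕ) (hn : ∀ k, 1 ≤ n k)
    (f : Fin K → ℕ → ℂ) (w : Fin K → ℕ → ℂ)
    (hw : ∀ k : Fin K,
      (X - C (z k)) ^ (n k) ∣
        (∏ j ∈ Finset.univ.erase k, (X - C (z j)) ^ (n j)) *
          (∑ r ∈ Finset.range (n k), C (w k r) * (X - C (z k)) ^ r) - 1) :
    (∑ k : Fin K, (∏ j ∈ Finset.univ.erase k, (X - C (z j)) ^ (n j)) *
        ∑ s ∈ Finset.range (n k), C (f k s / (s.factorial : ℂ)) *
          ∑ r ∈ Finset.range (n k - s), C (w k r) * (X - C (z k)) ^ (r + s)).degree <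
      ((∑ k, n k : ℕ) : WithBot ℕ) ∧
    ∀ k : Fin K, ∀ r < n k,
      (Polynomial.derivative^[r]
        (∑ k : Fin K, (∏ j ∈ Finset.univ.erase k, (X - C (z j)) ^ (n j)) *
          ∑ s ∈ Finset.range (n k), C (f k s / (s.factorial : ℂ)) *
            ∑ r ∈ Finset.range (n k - s), C (w k r) * (X - C (z k)) ^ (r + s))).eval (z k)
        = f k r := by
  constructor
  · -- degree bound
    refine lt_of_le_of_lt (Polynomial.degree_sum_le _ _) ?_
    rw [Finset.sup_lt_iff (WithBot.bot_lt_coe _)]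
    intro k _
    refine lt_of_le_of_lt (Polynomial.degree_mul_le _ _) ?_
    have h1 : (∏ j ∈ Finset.univ.erase k, (X - C (z j)) ^ (n j)).degree
        ≤ ((∑ j ∈ Finset.univ.erase k, n j : ℕ) : WithBot ℕ) := by
      refine le_trans (Polynomial.degree_prod_le _ _) ?_
      rw [Nat.cast_sum]
      exact Finset.sum_le_sum fun j _ => by
        rw [Polynomial.degree_pow, Polynomial.degree_X_sub_C]
        simp
    have h2 : (∑ s ∈ Finset.range (n k), C (f k s / (s.factorial : ℂ)) *
          ∑ r ∈ Finset.range (n k - s), C (w k r) * (X - C (z k)) ^ (r + s)).degree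
        < ((n k : ℕ) : WithBot ℕ) := by
      refine lt_of_le_of_lt (Polynomial.degree_sum_le _ _) ?_
      rw [Finset.sup_lt_iff (WithBot.bot_lt_coe _)]
      intro s hs
      refine lt_of_le_of_lt (Polynomial.degree_mul_le _ _) ?_
      have hC : (C (f k s / (s.factorial : ℂ))).degree ≤ 0 := Polynomial.degree_C_le
      have h3 : (∑ r ∈ Finset.range (n k - s), C (w k r) * (X - C (z k)) ^ (r + s)).degree
          < ((n k : ℕ) : WithBot ℕ) := by
        refine lt_of_le_of_lt (Polynomial.degree_sum_le _ _) ?_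
        rw [Finset.sup_lt_iff (WithBot.bot_lt_coe _)]
        intro r hr
        refine lt_of_le_of_lt (Polynomial.degree_mul_le _ _) ?_
        have : ((X - C (z k)) ^ (r + s)).degree = ((r + s : ℕ) : WithBot ℕ) := by
          rw [Polynomial.degree_pow, Polynomial.degree_X_sub_C]; simp
        calc (C (w k r)).degree + ((X - C (z k)) ^ (r + s)).degree
            ≤ 0 + ((r + s : ℕ) : WithBot ℕ) := by
              rw [this]; exact add_le_add_left Polynomial.degree_C_le _
          _ = ((r + s : ℕ) : WithBot ℕ) := by rw [zero_add]
          _ < ((n k : ℕ) : WithBot ℕ) := by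
              rw [Nat.cast_lt]
              have := Finset.mem_range.mp hr
              have := Finset.mem_range.mp hs
              omega
      calc (C (f k s / (s.factorial : ℂ))).degree
            + (∑ r ∈ Finset.range (n k - s), C (w k r) * (X - C (z k)) ^ (r + s)).degree
          ≤ 0 + (∑ r ∈ Finset.range (n k - s), C (w k r) * (X - C (z k)) ^ (r + s)).degree :=
            add_le_add_left hC _
        _ = _ := zero_add _
        _ < ((n k : ℕ) : WithBot ℕ) := h3
    calc (∏ j ∈ Finset.univ.erase k, (X - C (z j)) ^ (n j)).degree
          + (∑ s ∈ Finset.range (n k), C (f k s / (s.factorial : ℂ)) *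
            ∑ r ∈ Finset.range (n k - s), C (w k r) * (X - C (z k)) ^ (r + s)).degree
        < ((∑ j ∈ Finset.univ.erase k, n j : ℕ) : WithBot ℕ) + ((n k : ℕ) : WithBot ℕ) :=
          WithBot.add_lt_add_of_le_of_lt (by rw [Ne, Polynomial.degree_eq_bot]; exact Finset.prod_ne_zero_iff.mpr fun j _ => pow_ne_zero _ (X_sub_C_ne_zero _)) h1 h2
      _ = ((∑ j, n j : ℕ) : WithBot ℕ) := by
          rw [← Nat.cast_add, Finset.sum_erase_add _ _ (Finset.mem_univ k)]
  · -- interpolation conditions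
    intro k r hr
    set P : ℂ[X] := ∑ k : Fin K, (∏ j ∈ Finset.univ.erase k, (X - C (z j)) ^ (n j)) *
        ∑ s ∈ Finset.range (n k), C (f k s / (s.factorial : ℂ)) *
          ∑ r ∈ Finset.range (n k - s), C (w k r) * (X - C (z k)) ^ (r + s) with hP
    set H : ℂ[X] := ∑ s ∈ Finset.range (n k), C (f k s / (s.factorial : ℂ)) * (X - C (z k)) ^ s
      with hH
    have hdvd : (X - C (z k)) ^ (n k) ∣ P - H := by
      rw [hP, ← Finset.add_sum_erase _ _ (Finset.mem_univ k), add_sub_right_comm]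
      refine dvd_add ?_ (Finset.dvd_sum fun j hj => ?_)
      · exact key_dvd (z k) (n k) _ _ _ (hw k)
      · refine Dvd.dvd.mul_right (Finset.dvd_prod_of_mem (fun i => (X - C (z i)) ^ (n i)) ?_) _
        exact Finset.mem_erase.mpr ⟨(Finset.mem_erase.mp hj).1.symm, Finset.mem_univ k⟩
    have hPH : P = H + (P - H) := by ring
    rw [hPH, iterate_map_add, Polynomial.eval_add,
      evalIter_taylor (z k) (n k) r (f k) hr, evalIter_zero_of_dvd hdvd hr, add_zero]
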